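/- Let R be a Noetherian local complete ring, a a proper ideal, Λ a Noetherian R-algebra, I = aΛ, and n > 0 an integer such that Tor_1^R(Λ, R/a^n) = 0. Then the map ψ_n: Λ ⊗_R a^n/a^{n+1} → I^n/I^{n+1} sending a ⊗ (b + a^{n+1}) to ab + I^{n+1} is an isomorphism of Λ/I-bimodules. -/

import Mathlib

open TensorProduct CategoryTheory CategoryTheory.Limits

universe u


section TorAux

variable {R : Type u} [CommRing R]

private noncomputable def π0 {A : ModuleCat.{u} R} (Q : ProjectiveResolution A) :
    Q.complex.X 0 ⟶ A := Q.π.f 0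

private lemma res_surj {A : ModuleCat.{u} R} (Q : ProjectiveResolution A) :
    Function.Surjective (π0 Q) := by
  obtain ⟨hex, hepi⟩ := (ShortComplex.quasiIso_iff_of_zeros'
      ((HomologicalComplex.shortComplexFunctor' (ModuleCat.{u} R) _ 1 0 0).map Q.π)
      (Q.complex.shape 0 0 (by simp)) rfl rfl).1
    ((ChainComplex.quasiIsoAt₀_iff Q.π).1 inferInstance)
  rw [ModuleCat.epi_iff_surjective] at hepi
  exact hepi

private lemma res_exact0 {A : ModuleCat.{u} R} (Q : ProjectiveResolution A)
    (x : Q.complex.X 0) (hx : (π0 Q) x = 0) :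
    ∃ y, Q.complex.d 1 0 y = x := by
  obtain ⟨hex, hepi⟩ := (ShortComplex.quasiIso_iff_of_zeros'
      ((HomologicalComplex.shortComplexFunctor' (ModuleCat.{u} R) _ 1 0 0).map Q.π)
      (Q.complex.shape 0 0 (by simp)) rfl rfl).1
    ((ChainComplex.quasiIsoAt₀_iff Q.π).1 inferInstance)
  rw [ShortComplex.moduleCat_exact_iff] at hex
  exact hex x hx


private noncomputable def auxComplex (J : Submodule R R)
    (Q : ProjectiveResolution (ModuleCat.of R ↥J)) : ChainComplex (ModuleCat.{u} R) ℕ :=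
  ChainComplex.of
    (fun k => match k with
      | 0 => ModuleCat.of R R
      | (k+1) => Q.complex.X k)
    (fun k => match k with
      | 0 => (π0 Q) ≫ ModuleCat.ofHom J.subtype
      | (k+1) => Q.complex.d (k+1) k)
    (fun k => match k with
      | 0 => by
          rw [← Category.assoc,
            show Q.complex.d 1 0 ≫ (π0 Q) = 0 from
              Q.complex_d_comp_π_f_zero, zero_comp]
      | (k+1) => by simp)

private lemma auxComplex_d10 (J : Submodule R R)
    (Q : ProjectiveResolution (ModuleCat.of R ↥J)) :
    (auxComplex J Q).d 1 0 =
      (π0 Q) ≫ ModuleCat.ofHom J.subtype :=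
  by unfold auxComplex; simp [ChainComplex.of.d]

private lemma auxComplex_d_succ (J : Submodule R R)
    (Q : ProjectiveResolution (ModuleCat.of R ↥J)) (k : ℕ) :
    (auxComplex J Q).d (k + 2) (k + 1) = Q.complex.d (k+1) k :=
  by unfold auxComplex; simp [ChainComplex.of.d]


private noncomputable def auxPi (J : Submodule R R)
    (Q : ProjectiveResolution (ModuleCat.of R ↥J)) :
    auxComplex J Q ⟶ (ChainComplex.single₀ (ModuleCat.{u} R)).obj (ModuleCat.of R (R ⧸ J)) :=
  (ChainComplex.toSingle₀Equiv _ _).symm ⟨ModuleCat.ofHom J.mkQ, by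
    rw [auxComplex_d10]
    ext x
    exact (Submodule.Quotient.mk_eq_zero J).2 ((π0 Q) x).2⟩

private lemma auxPi_f0 (J : Submodule R R) (Q : ProjectiveResolution (ModuleCat.of R ↥J)) :
    (auxPi J Q).f 0 = ModuleCat.ofHom J.mkQ :=
  ChainComplex.toSingle₀Equiv_symm_apply_f_zero _ _

private noncomputable def auxResolution (J : Submodule R R)
    (Q : ProjectiveResolution (ModuleCat.of R ↥J)) :
    ProjectiveResolution (ModuleCat.of R (R ⧸ J)) where
  complex := auxComplex J Q
  projective n := by
    match n with
    | 0 => exact ModuleCat.projective_of_free (Module.Basis.singleton PUnit.{u+1} R)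
    | (k+1) => exact Q.projective k
  π := auxPi J Q
  quasiIso := ⟨fun n => by
    cases n with
    | zero =>
      rw [ChainComplex.quasiIsoAt₀_iff, ShortComplex.quasiIso_iff_of_zeros']
      rotate_left
      · exact (auxComplex J Q).shape 0 0 (by simp)
      · rfl
      · rfl
      constructor
      · rw [ShortComplex.moduleCat_exact_iff]
        dsimp [HomologicalComplex.shortComplexFunctor']
        rw [auxPi_f0, auxComplex_d10]
        intro (x : R) hx
        have hx2 : x ∈ J := (Submodule.Quotient.mk_eq_zero J).1 hx
        obtain ⟨y, hy⟩ := res_surj Q ⟨x, hx2⟩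
        refine ⟨y, ?_⟩
        have : (ModuleCat.ofHom J.subtype) ((π0 Q) y)
            = x := by rw [hy]; rfl
        exact this
      · dsimp [HomologicalComplex.shortComplexFunctor']
        rw [auxPi_f0]
        exact (ModuleCat.epi_iff_surjective _).2 (Submodule.mkQ_surjective J)
    | succ k =>
      rw [quasiIsoAt_iff_exactAt' (auxPi J Q) (k+1)
        (ChainComplex.exactAt_succ_single_obj _ _)]
      rw [HomologicalComplex.exactAt_iff' _ (k+2) (k+1) k (by simp) (by simp)]
      rw [ShortComplex.moduleCat_exact_iff]
      dsimp [HomologicalComplex.sc', HomologicalComplex.shortComplexFunctor']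
      rw [auxComplex_d_succ]
      match k with
      | 0 =>
        rw [auxComplex_d10]
        intro x hx
        exact res_exact0 Q x (Subtype.ext hx)
      | (k+1) =>
        rw [auxComplex_d_succ]
        intro x hx
        have := Q.exact_succ k
        rw [ShortComplex.moduleCat_exact_iff] at this
        exact this x hx⟩

private lemma lTensor_injective_of_isZero_tor
    (L : Type u) [AddCommGroup L] [Module R L] (J : Submodule R R)
    (htor : IsZero (((Tor (ModuleCat.{u} R) 1).obj (ModuleCat.of R L)).obj
      (ModuleCat.of R (R ⧸ J)))) :
    Function.Injective (LinearMap.lTensor L J.subtype) := by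
  obtain ⟨Q⟩ := (inferInstance : HasProjectiveResolution (ModuleCat.of R ↥J)).out
  set F := (MonoidalCategory.tensoringLeft (ModuleCat.{u} R)).obj (ModuleCat.of R L) with hF
  have htor' : IsZero ((F.leftDerived 1).obj (ModuleCat.of R (R ⧸ J))) := htor
  have hzero : IsZero
      ((HomologicalComplex.homologyFunctor (ModuleCat.{u} R) _ 1).obj
        ((F.mapHomologicalComplex _).obj (auxComplex J Q))) :=
    IsZero.of_iso htor' ((auxResolution J Q).isoLeftDerivedObj F 1).symm
  have hex : ((F.mapHomologicalComplex _).obj (auxComplex J Q)).ExactAt 1 :=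
    (HomologicalComplex.exactAt_iff_isZero_homology _ _).2 hzero
  rw [HomologicalComplex.exactAt_iff' _ 2 1 0 (by simp) (by simp),
    ShortComplex.moduleCat_exact_iff] at hex
  dsimp [HomologicalComplex.sc', HomologicalComplex.shortComplexFunctor'] at hex
  have hd10 : F.map ((auxComplex J Q).d 1 0) = ModuleCat.ofHom (LinearMap.lTensor L
      (J.subtype ∘ₗ (π0 Q).hom)) := by
    rw [auxComplex_d10]; rfl
  have hd21 : F.map ((auxComplex J Q).d 2 1) =
      ModuleCat.ofHom (LinearMap.lTensor L (Q.complex.d 1 0).hom) := by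
    rw [auxComplex_d_succ J Q 0]; rfl
  rw [← LinearMap.ker_eq_bot, eq_bot_iff]
  rintro z hz
  rw [LinearMap.mem_ker] at hz
  obtain ⟨y, rfl⟩ := LinearMap.lTensor_surjective L (res_surj Q) z
  have h1 : LinearMap.lTensor L
      (J.subtype ∘ₗ (π0 Q).hom) y = 0 := by
    rw [LinearMap.lTensor_comp, LinearMap.comp_apply]
    exact hz
  obtain ⟨w, hw⟩ := hex y h1
  have h2 : ((π0 Q).hom ∘ₗ (Q.complex.d 1 0).hom)
      = 0 := congrArg ModuleCat.Hom.hom Q.complex_d_comp_π_f_zero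
  rw [← hw]
  show LinearMap.lTensor L (π0 Q).hom
      ((LinearMap.lTensor L (Q.complex.d 1 0).hom) w) ∈ (⊥ : Submodule R _)
  have h3 : (LinearMap.lTensor L (π0 Q).hom) ∘ₗ (LinearMap.lTensor L (Q.complex.d 1 0).hom)
      = 0 := by
    rw [← LinearMap.lTensor_comp, h2]; simp
  exact (Submodule.mem_bot R).2 (LinearMap.congr_fun h3 w)

end TorAux

set_option maxHeartbeats 2000000 in
/-- Let `R` be a complete local Noetherian ring, `a` a proper ideal,
`Λ` a Noetherian `R`-algebra, `I = aΛ`, and `n > 0` an integer such that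
`Tor_1^R(Λ, R/a^n) = 0`.  Then the map
`ψ_n : Λ ⊗_R a^n/a^{n+1} → I^n/I^{n+1}`, `l ⊗ (b + a^{n+1}) ↦ lb + I^{n+1}`, is an
isomorphism (here formalised as a `Λ`-linear equivalence satisfying the defining formula
on pure tensors, which determines compatibility with both bimodule structures). -/
theorem conormal_base_change_iso
    {R : Type u} [CommRing R] [IsNoetherianRing R] [IsLocalRing R]
    (hcomplete : IsAdicComplete (IsLocalRing.maximalIdeal R) R)
    (a : Ideal R) (ha : a ≤ IsLocalRing.maximalIdeal R)
    {Λ : Type u} [Ring Λ] [Algebra R Λ] [Module.Finite R Λ] (n : ℕ) (hn : 0 < n)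
    (htor : CategoryTheory.Limits.IsZero (((CategoryTheory.Tor (ModuleCat.{u} R) 1).obj
      (ModuleCat.of R Λ)).obj (ModuleCat.of R (R ⧸ (a ^ n))))) :
    ∃ ψ : (Λ ⊗[R] ((↥(a ^ n)) ⧸ (a • ⊤ : Submodule R ↥(a ^ n)))) ≃ₗ[Λ]
        ((↥(Ideal.map (algebraMap R Λ) (a ^ n))) ⧸
          (Submodule.comap (Ideal.map (algebraMap R Λ) (a ^ n)).subtype
            (Ideal.map (algebraMap R Λ) (a ^ (n + 1))))),
      ∀ (l : Λ) (b : ↥(a ^ n)),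
        ψ (l ⊗ₜ[R] Submodule.Quotient.mk b) =
          Submodule.Quotient.mk
            ⟨(b : R) • l, by
              have hb : algebraMap R Λ (b : R) ∈ Ideal.map (algebraMap R Λ) (a ^ n) :=
                Ideal.mem_map_of_mem _ b.2
              rw [Algebra.smul_def, Algebra.commutes]
              simpa [smul_eq_mul] using
                Submodule.smul_mem (Ideal.map (algebraMap R Λ) (a ^ n)) l hb⟩ := by
  have hinjJ : Function.Injective (LinearMap.lTensor Λ (a ^ n : Ideal R).subtype) :=
    lTensor_injective_of_isZero_tor Λ (a ^ n : Ideal R) htor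
  set In : Ideal Λ := Ideal.map (algebraMap R Λ) (a ^ n) with hIn
  set In1 : Ideal Λ := Ideal.map (algebraMap R Λ) (a ^ (n + 1)) with hIn1
  set p : Submodule Λ ↥In := Submodule.comap In.subtype In1 with hp
  -- membership lemmas
  have hmem : ∀ (l : Λ) (c : R), c ∈ a ^ n → c • l ∈ In := by
    intro l c hc
    have hb : algebraMap R Λ c ∈ In := Ideal.mem_map_of_mem _ hc
    rw [Algebra.smul_def, Algebra.commutes]
    simpa [smul_eq_mul] using Submodule.smul_mem In l hb
  have hmem1 : ∀ (l : Λ) (c : R), c ∈ a ^ (n + 1) → c • l ∈ In1 := by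
    intro l c hc
    have hb : algebraMap R Λ c ∈ In1 := Ideal.mem_map_of_mem _ hc
    rw [Algebra.smul_def, Algebra.commutes]
    simpa [smul_eq_mul] using Submodule.smul_mem In1 l hb
  have hmapsm : (a • ⊤ : Submodule R ↥(a ^ n)).map (a ^ n : Ideal R).subtype = a ^ (n + 1) := by
    rw [Submodule.map_smul'', Submodule.map_top, Submodule.range_subtype,
      Ideal.smul_eq_mul, ← pow_succ']
  have hval : ∀ c : ↥(a • ⊤ : Submodule R ↥(a ^ n)), ((c : ↥(a ^ n)) : R) ∈ a ^ (n + 1) := by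
    intro c
    rw [← hmapsm]
    exact Submodule.mem_map_of_mem c.2
  -- the basic bilinear map
  have hg0smul : ∀ (l : Λ) (r : R) (b : ↥(a ^ n)),
      (((r • b : ↥(a ^ n)) : R)) • l = r • (((b : ↥(a ^ n)) : R) • l) := by
    intro l r b
    rw [Submodule.coe_smul, smul_eq_mul, mul_smul]
  let g0 : Λ → (↥(a ^ n) →ₗ[R] ↥In) := fun l =>
    { toFun := fun b => ⟨(b : R) • l, hmem l (b : R) b.2⟩
      map_add' := fun b c => Subtype.ext (by
        show ((↑(b + c) : R)) • l = (b : R) • l + (c : R) • l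
        rw [Submodule.coe_add, add_smul])
      map_smul' := fun r b => Subtype.ext (by
        show ((↑(r • b) : R)) • l = r • ((b : R) • l)
        rw [Submodule.coe_smul, smul_eq_mul, mul_smul]) }
  let g : Λ →ₗ[Λ] (↥(a ^ n) →ₗ[R] ↥In) :=
    { toFun := g0
      map_add' := fun l l' => LinearMap.ext fun b => Subtype.ext (by
        show (b : R) • (l + l') = (b : R) • l + (b : R) • l'
        rw [smul_add])
      map_smul' := fun m l => LinearMap.ext fun b => Subtype.ext (by
        show (b : R) • (m • l) = m • ((b : R) • l)
        rw [smul_comm]) }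
  let θ : (Λ ⊗[R] ↥(a ^ n)) →ₗ[Λ] ↥In := TensorProduct.AlgebraTensorModule.lift g
  let θfull : (Λ ⊗[R] ↥(a ^ n)) →ₗ[Λ] Λ := In.subtype ∘ₗ θ
  have hθfull : ∀ x, θfull x =
      (TensorProduct.rid R Λ) (LinearMap.lTensor Λ (a ^ n : Ideal R).subtype x) := by
    intro x
    induction x using TensorProduct.induction_on with
    | zero => simp
    | tmul l b => simp [θfull, θ, g, g0]
    | add x y hx hy => simp [map_add, hx, hy]
  have hinjθ : Function.Injective θfull := by
    intro x y hxy
    apply hinjJ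
    apply (TensorProduct.rid R Λ).injective
    rw [← hθfull, ← hθfull, hxy]
  -- the submodule S
  let S : Submodule Λ (Λ ⊗[R] ↥(a ^ n)) := LinearMap.range
    (TensorProduct.AlgebraTensorModule.map (LinearMap.id : Λ →ₗ[Λ] Λ)
      ((a • ⊤ : Submodule R ↥(a ^ n)).subtype))
  have hθS : Submodule.map θfull S = In1 := by
    apply le_antisymm
    · rintro x ⟨y, ⟨w, rfl⟩, rfl⟩
      induction w using TensorProduct.induction_on with
      | zero => simpa using zero_mem In1
      | tmul l c =>
        have : θfull ((TensorProduct.AlgebraTensorModule.map (LinearMap.id : Λ →ₗ[Λ] Λ)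
            ((a • ⊤ : Submodule R ↥(a ^ n)).subtype)) (l ⊗ₜ c)) = ((c : ↥(a ^ n)) : R) • l := by
          simp [θfull, θ, g, g0]
        rw [this]
        exact hmem1 l _ (hval c)
      | add x y hx hy => simp only [map_add]; exact add_mem hx hy
    · rw [hIn1]
      rw [Ideal.map_le_iff_le_comap]
      intro c hc
      rw [← hmapsm] at hc
      obtain ⟨c₀, hc₀, hcc⟩ := hc
      refine ⟨(TensorProduct.AlgebraTensorModule.map (LinearMap.id : Λ →ₗ[Λ] Λ)
          ((a • ⊤ : Submodule R ↥(a ^ n)).subtype)) ((1 : Λ) ⊗ₜ ⟨c₀, hc₀⟩), ⟨_, rfl⟩, ?_⟩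
      show ((c₀ : ↥(a ^ n)) : R) • (1 : Λ) = algebraMap R Λ c
      rw [show ((c₀ : ↥(a ^ n)) : R) = c from hcc, Algebra.smul_def, mul_one]
  -- descend to the quotient
  have hker : ∀ l : Λ, (a • ⊤ : Submodule R ↥(a ^ n)) ≤ LinearMap.ker
      ((p.mkQ.restrictScalars R) ∘ₗ (g l)) := by
    intro l c hc
    rw [LinearMap.mem_ker, LinearMap.comp_apply, LinearMap.restrictScalars_apply,
      Submodule.mkQ_apply, Submodule.Quotient.mk_eq_zero]
    show g l c ∈ Submodule.comap In.subtype In1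
    rw [Submodule.mem_comap]
    exact hmem1 l _ (hval ⟨c, hc⟩)
  let gbar : Λ →ₗ[Λ] ((↥(a ^ n) ⧸ (a • ⊤ : Submodule R ↥(a ^ n))) →ₗ[R] (↥In ⧸ p)) :=
    { toFun := fun l => Submodule.liftQ _ ((p.mkQ.restrictScalars R) ∘ₗ (g l)) (hker l)
      map_add' := fun l l' => by
        apply LinearMap.ext
        intro x
        obtain ⟨b, rfl⟩ := Submodule.Quotient.mk_surjective _ x
        rw [LinearMap.add_apply, Submodule.liftQ_apply, Submodule.liftQ_apply,
          Submodule.liftQ_apply, LinearMap.comp_apply, LinearMap.comp_apply,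
          LinearMap.comp_apply, g.map_add, LinearMap.add_apply, map_add]
      map_smul' := fun m l => by
        apply LinearMap.ext
        intro x
        obtain ⟨b, rfl⟩ := Submodule.Quotient.mk_surjective _ x
        rw [RingHom.id_apply, LinearMap.smul_apply, Submodule.liftQ_apply,
          Submodule.liftQ_apply, LinearMap.comp_apply, LinearMap.comp_apply,
          g.map_smul, LinearMap.smul_apply, LinearMap.restrictScalars_apply,
          LinearMap.restrictScalars_apply, p.mkQ.map_smul] }
  let ψ0 : (Λ ⊗[R] (↥(a ^ n) ⧸ (a • ⊤ : Submodule R ↥(a ^ n)))) →ₗ[Λ] (↥In ⧸ p) :=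
    TensorProduct.AlgebraTensorModule.lift gbar
  have hform : ∀ (l : Λ) (b : ↥(a ^ n)),
      ψ0 (l ⊗ₜ[R] Submodule.Quotient.mk b) = Submodule.Quotient.mk (g l b) := by
    intro l b
    rfl
  -- surjectivity
  have haux : ∀ (x : Λ) (hx : x ∈ In), ∃ t, ψ0 t = Submodule.Quotient.mk (⟨x, hx⟩ : ↥In) := by
    intro x hx
    refine Submodule.span_induction ?_ ?_ ?_ ?_ hx
    · rintro y ⟨c, hc, rfl⟩
      refine ⟨(1 : Λ) ⊗ₜ Submodule.Quotient.mk ⟨c, hc⟩, ?_⟩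
      rw [hform]
      congr 1
      refine Subtype.ext ?_
      show ((⟨c, hc⟩ : ↥(a ^ n)) : R) • (1 : Λ) = algebraMap R Λ c
      rw [Algebra.smul_def, mul_one]
    · refine ⟨0, ?_⟩
      rw [map_zero]
      symm
      rw [Submodule.Quotient.mk_eq_zero]
      exact zero_mem p
    · rintro x y hxm hym ⟨t, ht⟩ ⟨s, hs⟩
      refine ⟨t + s, ?_⟩
      rw [map_add, ht, hs, ← Submodule.Quotient.mk_add]
      rfl
    · rintro m x hxm ⟨t, ht⟩
      refine ⟨m • t, ?_⟩
      rw [map_smul, ht, ← Submodule.Quotient.mk_smul]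
      rfl
  have hsurj : Function.Surjective ψ0 := by
    intro q
    obtain ⟨v, rfl⟩ := Submodule.mkQ_surjective p q
    obtain ⟨t, ht⟩ := haux (v : Λ) v.2
    exact ⟨t, ht⟩
  -- injectivity
  have hcomm : ∀ x : Λ ⊗[R] ↥(a ^ n),
      ψ0 (LinearMap.lTensor Λ (a • ⊤ : Submodule R ↥(a ^ n)).mkQ x) = p.mkQ (θ x) := by
    intro x
    induction x using TensorProduct.induction_on with
    | zero => simp
    | tmul l b => rfl
    | add x y hx hy => simp only [map_add, hx, hy]
  have hSzero : ∀ s ∈ S, LinearMap.lTensor Λ (a • ⊤ : Submodule R ↥(a ^ n)).mkQ s = 0 := by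
    rintro s ⟨w, rfl⟩
    induction w using TensorProduct.induction_on with
    | zero => simp
    | tmul l c =>
      show LinearMap.lTensor Λ (a • ⊤ : Submodule R ↥(a ^ n)).mkQ
        (l ⊗ₜ ((c : ↥(a ^ n)))) = 0
      rw [LinearMap.lTensor_tmul, Submodule.mkQ_apply,
        (Submodule.Quotient.mk_eq_zero _).2 c.2, tmul_zero]
    | add x y hx hy => rw [map_add, map_add, hx, hy, add_zero]
  have hinjψ : Function.Injective ψ0 := by
    rw [← LinearMap.ker_eq_bot, eq_bot_iff]
    intro z hz
    rw [LinearMap.mem_ker] at hz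
    obtain ⟨x, rfl⟩ := LinearMap.lTensor_surjective Λ
      (Submodule.mkQ_surjective (a • ⊤ : Submodule R ↥(a ^ n))) z
    rw [hcomm] at hz
    rw [Submodule.mkQ_apply, Submodule.Quotient.mk_eq_zero] at hz
    have h2 : θfull x ∈ In1 := Submodule.mem_comap.1 hz
    rw [← hθS] at h2
    obtain ⟨s, hsS, hs⟩ := h2
    rw [← hinjθ hs]
    have := hSzero s hsS
    simp [this]
  refine ⟨LinearEquiv.ofBijective ψ0 ⟨hinjψ, hsurj⟩, ?_⟩
  intro l b
  show ψ0 (l ⊗ₜ[R] Submodule.Quotient.mk b) = _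
  exact hform l b
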